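/- For any two skew diagrams I and J, the supersymmetric skew Schur functions satisfy s_I(X,Y) · s_J(X,Y) = s_{I▶J}(X,Y) + s_{I↑J}(X,Y). -/

import Mathlib

noncomputable section

/-- A box in the plane: `(row, column)`, rows increasing downward (English notation). -/
abbrev Box : Type := ℤ × ℤ

/-- The content of a box `(i, j)` is `j - i`. -/
def boxContent (b : Box) : ℤ := b.2 - b.1

/-- An integer partition, indexed from `1` (the value `part 0` is irrelevant). -/
structure Partition' where
  part : ℕ → ℕ
  antitone : ∀ ⦃i j : ℕ⦄, i ≤ j → part j ≤ part i
  eventually_zero : ∃ N : ℕ, ∀ i : ℕ, N ≤ i → part i = 0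

/-- The skew diagram `λ/μ`: boxes `(i, j)` with `i ≥ 1` and `μ_i < j ≤ λ_i`. -/
def skewCells (lam mu : Partition') : Set Box :=
  {b : Box | 1 ≤ b.1 ∧ (mu.part b.1.toNat : ℤ) < b.2 ∧ b.2 ≤ (lam.part b.1.toNat : ℤ)}

/-- `D` is the set of boxes of a skew diagram `λ/μ` for some partitions `μ ⊆ λ`. -/
def IsSkewShape (D : Set Box) : Prop :=
  ∃ lam mu : Partition', (∀ i, mu.part i ≤ lam.part i) ∧ D = skewCells lam mu

/-- Translate a set of boxes by a vector `v`. -/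
def boxTranslate (v : Box) (D : Set Box) : Set Box := (fun b => b + v) '' D

/-- `D` is a translate of a skew diagram. -/
def IsSkewLike (D : Set Box) : Prop := ∃ v : Box, IsSkewShape (boxTranslate v D)

/-- Two boxes share a common edge. -/
def boxAdj (a b : Box) : Prop :=
  (a.1 = b.1 ∧ (a.2 = b.2 + 1 ∨ b.2 = a.2 + 1)) ∨
  (a.2 = b.2 ∧ (a.1 = b.1 + 1 ∨ b.1 = a.1 + 1))

/-- Any two boxes of `D` are joined by a path of boxes of `D` in which consecutive
boxes share a common edge. -/
def EdgewiseConnected (D : Set Box) : Prop :=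
  ∀ a ∈ D, ∀ b ∈ D, Relation.ReflTransGen (fun x y => x ∈ D ∧ y ∈ D ∧ boxAdj x y) a b

/-- `D` contains no `2 × 2` block of boxes. -/
def NoTwoByTwo (D : Set Box) : Prop :=
  ∀ b : Box, ¬(b ∈ D ∧ (b.1, b.2 + 1) ∈ D ∧ (b.1 + 1, b.2) ∈ D ∧ (b.1 + 1, b.2 + 1) ∈ D)

/-- A border strip (ribbon): a nonempty edgewise connected skew diagram (up to translation)
containing no `2 × 2` block of boxes. -/
def IsBorderStrip (B : Set Box) : Prop :=
  B.Nonempty ∧ IsSkewLike B ∧ EdgewiseConnected B ∧ NoTwoByTwo B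

/-- `b` is the starting box (lower-left end) of `B`: no box of `B` directly to its left
nor directly below it. -/
def IsStartBox (B : Set Box) (b : Box) : Prop :=
  b ∈ B ∧ (b.1, b.2 - 1) ∉ B ∧ (b.1 + 1, b.2) ∉ B

/-- `b` is the ending box (upper-right end) of `B`: no box of `B` directly above it
nor directly to its right. -/
def IsEndBox (B : Set Box) (b : Box) : Prop :=
  b ∈ B ∧ (b.1 - 1, b.2) ∉ B ∧ (b.1, b.2 + 1) ∉ B

/-- The strip `B` has starting box of content `p` and ending box of content `q`. -/
def HasPQ (B : Set Box) (p q : ℤ) : Prop :=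
  (∃ b : Box, IsStartBox B b ∧ boxContent b = p) ∧
  (∃ b : Box, IsEndBox B b ∧ boxContent b = q)

/-- An outside decomposition of `D`: a partition of the boxes of `D` into pairwise disjoint
border strips, each strip having its starting box on the left or bottom perimeter of `D` and
its ending box on the right or top perimeter of `D`. -/
def IsOutsideDecomposition (D : Set Box) (P : Set (Set Box)) : Prop :=
  (∀ θ ∈ P, IsBorderStrip θ ∧ θ ⊆ D) ∧
  (∀ b ∈ D, ∃! θ : Set Box, θ ∈ P ∧ b ∈ θ) ∧
  (∀ θ ∈ P, ∀ b : Box, IsStartBox θ b → ((b.1, b.2 - 1) ∉ D ∨ (b.1 + 1, b.2) ∉ D)) ∧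
  (∀ θ ∈ P, ∀ b : Box, IsEndBox θ b → ((b.1 - 1, b.2) ∉ D ∨ (b.1, b.2 + 1) ∉ D))

/-- The box `b` of `D` goes up in the outside decomposition `P`: in the strip of `P`
containing it, the next box is directly above it; an ending box goes up when no box of `D`
lies directly above it. -/
def GoesUp (D : Set Box) (P : Set (Set Box)) (b : Box) : Prop :=
  ∃ θ ∈ P, b ∈ θ ∧ ((b.1 - 1, b.2) ∈ θ ∨ (IsEndBox θ b ∧ (b.1 - 1, b.2) ∉ D))

/-- The box `b` of `D` goes right in the outside decomposition `P`: in the strip of `P`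
containing it, the next box is directly to its right; an ending box goes right when some box
of `D` lies directly above it. -/
def GoesRight (D : Set Box) (P : Set (Set Box)) (b : Box) : Prop :=
  ∃ θ ∈ P, b ∈ θ ∧ ((b.1, b.2 + 1) ∈ θ ∨ (IsEndBox θ b ∧ (b.1 - 1, b.2) ∈ D))

/-- `T` is a cutting strip of the outside decomposition `P` of `D`: a border strip whose
boxes are labeled by the contents of `D` (each content appearing once), in which the box
labeled `c` goes up or goes right according as the boxes of the diagonal of content `c`
of `D` go up or go right in `P`. -/
def IsCuttingStripOf (D : Set Box) (P : Set (Set Box)) (T : Set Box) : Prop :=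
  IsBorderStrip T ∧ boxContent '' T = boxContent '' D ∧
  ∀ b ∈ T, ∀ c ∈ D, boxContent c = boxContent b →
    (((b.1 - 1, b.2) ∈ T → GoesUp D P c) ∧ ((b.1, b.2 + 1) ∈ T → GoesRight D P c))

/-- The segment `φ[p, q]` of a strip `T`: its boxes of content between `p` and `q`. -/
def stripSegment (T : Set Box) (p q : ℤ) : Set Box :=
  {b ∈ T | p ≤ boxContent b ∧ boxContent b ≤ q}

/-- The box of content `c` of the strip `T` goes up (the next box is directly above it). -/
def StripGoesUpAt (T : Set Box) (c : ℤ) : Prop :=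
  ∃ b ∈ T, boxContent b = c ∧ (b.1 - 1, b.2) ∈ T

/-- The box of content `c` of the strip `T` goes right (the next box is directly right of it). -/
def StripGoesRightAt (T : Set Box) (c : ℤ) : Prop :=
  ∃ b ∈ T, boxContent b = c ∧ (b.1, b.2 + 1) ∈ T

/-- `T'` is obtained from the strip `T` by reversing the direction (up versus right) of the
box labeled `i`, keeping the directions of all other boxes. -/
def IsTwist (i : ℤ) (T T' : Set Box) : Prop :=
  boxContent '' T' = boxContent '' T ∧
  (∀ c : ℤ, c ≠ i → (StripGoesUpAt T c ↔ StripGoesUpAt T' c)) ∧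
  (StripGoesUpAt T i ↔ StripGoesRightAt T' i)

/-- The inversion number of an outside decomposition: the number of ordered pairs of
strips `(θ₁, θ₂)` with `p(θ₁) > p(θ₂)` and `q(θ₁) < q(θ₂)`. -/
def invOD (P : Set (Set Box)) : ℕ :=
  {θθ : Set Box × Set Box | θθ.1 ∈ P ∧ θθ.2 ∈ P ∧
    ∃ p₁ q₁ p₂ q₂ : ℤ, HasPQ θθ.1 p₁ q₁ ∧ HasPQ θθ.2 p₂ q₂ ∧ p₂ < p₁ ∧ q₁ < q₂}.ncard

/-- A semistandard Young tableau of shape `D`: entries (variable indices) weakly increase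
along rows and strictly increase down columns; entries outside `D` are normalized to `0`. -/
def IsSSYT (D : Set Box) (T : Box → ℕ) : Prop :=
  (∀ b ∈ D, (b.1, b.2 + 1) ∈ D → T b ≤ T (b.1, b.2 + 1)) ∧
  (∀ b ∈ D, (b.1 + 1, b.2) ∈ D → T b < T (b.1 + 1, b.2)) ∧
  (∀ b : Box, b ∉ D → T b = 0)

/-- The skew Schur function of a skew diagram `D`, as a formal power series in the
variables `x_n` (`n : ℕ`): the coefficient of a monomial `μ` is the number of semistandard
Young tableaux of shape `D` using each variable `n` exactly `μ n` times. -/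
def schur (D : Set Box) : MvPowerSeries ℕ ℤ :=
  fun μ => ({T : Box → ℕ | IsSSYT D T ∧ ∀ n : ℕ, μ n = {b ∈ D | T b = n}.ncard}.ncard : ℤ)

/-- `b` is the upper-right corner box of `D`: the rightmost box of the top row. -/
def IsUpperRightCorner (D : Set Box) (b : Box) : Prop :=
  b ∈ D ∧ (∀ c ∈ D, b.1 ≤ c.1) ∧ ∀ c ∈ D, c.1 = b.1 → c.2 ≤ b.2

/-- `b` is the lower-left corner box of `D`: the leftmost box of the bottom row. -/
def IsLowerLeftCorner (D : Set Box) (b : Box) : Prop :=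
  b ∈ D ∧ (∀ c ∈ D, c.1 ≤ b.1) ∧ ∀ c ∈ D, c.1 = b.1 → b.2 ≤ c.2

/-- The block (edgewise connected component) of `D` containing the box `a`. -/
def blockOf (D : Set Box) (a : Box) : Set Box :=
  {b : Box | Relation.ReflTransGen (fun x y => x ∈ D ∧ y ∈ D ∧ boxAdj x y) a b}

/-- The complete homogeneous symmetric function `h_r` (`h_0 = 1`, `h_r = 0` for `r < 0`):
the sum of all monomials of degree `r`. -/
def hSym (r : ℤ) : MvPowerSeries ℕ ℤ :=
  fun μ => if ((μ.sum fun _ e => e : ℕ) : ℤ) = r then 1 else 0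

/-- The elementary symmetric function `e_r` (`e_0 = 1`, `e_r = 0` for `r < 0`):
the sum of all squarefree monomials of degree `r`. -/
def eSym (r : ℤ) : MvPowerSeries ℕ ℤ :=
  fun μ => if (∀ n ∈ μ.support, μ n = 1) ∧ ((μ.sum fun _ e => e : ℕ) : ℤ) = r then 1 else 0

/-- The `j`-th part (`j ≥ 1`) of the conjugate partition: the number of indices `i ≥ 1`
with `λ_i ≥ j`. -/
def conjPart (lam : Partition') (j : ℕ) : ℕ := {i : ℕ | 1 ≤ i ∧ j ≤ lam.part i}.ncard

/-- The order on the supersymmetric alphabet `x_0 < x_1 < ⋯ < y_0 < y_1 < ⋯`,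
with `Sum.inl n` representing `x_n` and `Sum.inr n` representing `y_n`. -/
def entryLE : ℕ ⊕ ℕ → ℕ ⊕ ℕ → Prop
  | Sum.inl a, Sum.inl b => a ≤ b
  | Sum.inl _, Sum.inr _ => True
  | Sum.inr _, Sum.inl _ => False
  | Sum.inr a, Sum.inr b => a ≤ b

/-- A super tableau of shape `D`: rows and columns weakly increase, the `x`-symbols
strictly increase down columns, the `y`-symbols strictly increase along rows; entries
outside `D` are normalized to `Sum.inl 0`. -/
def IsSuperSSYT (D : Set Box) (T : Box → ℕ ⊕ ℕ) : Prop :=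
  (∀ b ∈ D, (b.1, b.2 + 1) ∈ D → entryLE (T b) (T (b.1, b.2 + 1))) ∧
  (∀ b ∈ D, (b.1 + 1, b.2) ∈ D → entryLE (T b) (T (b.1 + 1, b.2))) ∧
  (∀ b ∈ D, (b.1 + 1, b.2) ∈ D →
    ∀ a c : ℕ, T b = Sum.inl a → T (b.1 + 1, b.2) = Sum.inl c → a < c) ∧
  (∀ b ∈ D, (b.1, b.2 + 1) ∈ D →
    ∀ a c : ℕ, T b = Sum.inr a → T (b.1, b.2 + 1) = Sum.inr c → a < c) ∧
  (∀ b : Box, b ∉ D → T b = Sum.inl 0)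

/-- The supersymmetric skew Schur function `s_D(X, Y)`, as a formal power series in the
variables `x_n, y_n`: the coefficient of a monomial `μ` is the number of super tableaux
of shape `D` using each symbol `v` exactly `μ v` times. -/
def superSchur (D : Set Box) : MvPowerSeries (ℕ ⊕ ℕ) ℤ :=
  fun μ =>
    ({T : Box → ℕ ⊕ ℕ | IsSuperSSYT D T ∧
        ∀ v : ℕ ⊕ ℕ, μ v = {b ∈ D | T b = v}.ncard}.ncard : ℤ)

/-! ### Auxiliary development for the product rule -/

namespace SuperGlue

abbrev E : Type := ℕ ⊕ ℕ

/-- Row-compatibility of two horizontally adjacent entries (left, right). -/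
def rowOK (a b : E) : Prop :=
  entryLE a b ∧ ∀ m n : ℕ, a = Sum.inr m → b = Sum.inr n → m < n

/-- Column-compatibility of two vertically adjacent entries (top, bottom). -/
def colOK (a b : E) : Prop :=
  entryLE a b ∧ ∀ m n : ℕ, a = Sum.inl m → b = Sum.inl n → m < n

lemma rowOK_or_colOK (a b : E) :
    (rowOK a b ∧ ¬ colOK b a) ∨ (¬ rowOK a b ∧ colOK b a) := by
  rcases a with a | a <;> rcases b with b | b <;>
    simp [rowOK, colOK, entryLE] <;> omega

open Classical in
/-- Restriction of a filling to a set, normalized outside. -/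
def resT (S : Set Box) (T : Box → E) : Box → E :=
  fun b => if b ∈ S then T b else Sum.inl 0

open Classical in
/-- Gluing of two fillings. -/
def glueT (I : Set Box) (T₁ T₂ : Box → E) : Box → E :=
  fun b => if b ∈ I then T₁ b else T₂ b

/-- Shift of a filling by a vector. -/
def shiftT (v : Box) (T : Box → E) : Box → E :=
  fun b => T (b.1 - v.1, b.2 - v.2)

/-- Translate of a set of boxes, as a sublevel description. -/
def trK (v : Box) (J : Set Box) : Set Box := {b : Box | ((b.1 - v.1, b.2 - v.2) : Box) ∈ J}

lemma boxTranslate_eq_trK (v : Box) (J : Set Box) : boxTranslate v J = trK v J := by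
  ext b
  constructor
  · rintro ⟨c, hc, rfl⟩
    simpa [trK, Prod.ext_iff] using hc
  · intro hb
    exact ⟨(b.1 - v.1, b.2 - v.2), hb, by simp [Prod.ext_iff]⟩

lemma mem_trK {v : Box} {J : Set Box} {b : Box} :
    b ∈ trK v J ↔ ((b.1 - v.1, b.2 - v.2) : Box) ∈ J := Iff.rfl

/-- Count of boxes of `S` carrying the symbol `x`. -/
def cnt (S : Set Box) (T : Box → E) (x : E) : ℕ := {b ∈ S | T b = x}.ncard

lemma cnt_congr {S : Set Box} {T T' : Box → E} (h : ∀ b ∈ S, T b = T' b) (x : E) :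
    cnt S T x = cnt S T' x := by
  unfold cnt
  congr 1
  ext b
  exact ⟨fun ⟨hb, he⟩ => ⟨hb, (h b hb) ▸ he⟩, fun ⟨hb, he⟩ => ⟨hb, (h b hb) ▸ he⟩⟩

lemma cnt_union {A B : Set Box} (hA : A.Finite) (hB : B.Finite)
    (hdis : ∀ b, b ∈ A → b ∉ B) (T : Box → E) (x : E) :
    cnt (A ∪ B) T x = cnt A T x + cnt B T x := by
  unfold cnt
  rw [show {b ∈ A ∪ B | T b = x} = {b ∈ A | T b = x} ∪ {b ∈ B | T b = x} by
      ext b; simp only [Set.mem_setOf_eq, Set.mem_union]; tauto]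
  exact Set.ncard_union_eq (by
      rw [Set.disjoint_left]; rintro b ⟨hb, -⟩ ⟨hb', -⟩; exact hdis b hb hb')
    (hA.subset (fun b hb => hb.1)) (hB.subset (fun b hb => hb.1))

lemma cnt_trK (v : Box) (J : Set Box) (T : Box → E) (x : E) :
    cnt (trK v J) (shiftT v T) x = cnt J T x := by
  unfold cnt
  have : {b ∈ trK v J | shiftT v T b = x} = (fun b : Box => b + v) '' {b ∈ J | T b = x} := by
    ext b
    constructor
    · rintro ⟨hb, he⟩
      exact ⟨(b.1 - v.1, b.2 - v.2), ⟨hb, he⟩, by simp [Prod.ext_iff]⟩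
    · rintro ⟨c, ⟨hc, he⟩, rfl⟩
      refine ⟨?_, ?_⟩
      · simpa [mem_trK, Prod.ext_iff] using hc
      · simpa [shiftT, Prod.ext_iff] using he
  rw [this, Set.ncard_image_of_injective _ (add_left_injective v)]

end SuperGlue
namespace SuperGlue

lemma box_eq {a b : Box} (h1 : a.1 = b.1) (h2 : a.2 = b.2) : a = b := by
  cases a; cases b; simp_all

lemma app_congr (T : Box → E) {a b : Box} (h1 : a.1 = b.1) (h2 : a.2 = b.2) : T a = T b := by
  rw [box_eq h1 h2]

lemma ssyt_shift (v : Box) (J : Set Box) (T : Box → E) (h : IsSuperSSYT J T) :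
    IsSuperSSYT (trK v J) (shiftT v T) := by
  obtain ⟨h1, h2, h3, h4, h5⟩ := h
  have eR : ∀ b : Box, shiftT v T (b.1, b.2 + 1) = T (b.1 - v.1, b.2 - v.2 + 1) := by
    intro b; unfold shiftT; exact app_congr T (by simp) (by simp; omega)
  have eD : ∀ b : Box, shiftT v T (b.1 + 1, b.2) = T (b.1 - v.1 + 1, b.2 - v.2) := by
    intro b; unfold shiftT; exact app_congr T (by simp; omega) (by simp)
  have mR : ∀ b : Box, ((b.1, b.2 + 1) : Box) ∈ trK v J ↔ ((b.1 - v.1, b.2 - v.2 + 1) : Box) ∈ J := by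
    intro b; rw [mem_trK]
    have e : ((((b.1, b.2 + 1) : Box).1 - v.1, ((b.1, b.2 + 1) : Box).2 - v.2) : Box) = ((b.1 - v.1, b.2 - v.2 + 1) : Box) := box_eq (by simp) (by simp; omega)
    rw [e]
  have mD : ∀ b : Box, ((b.1 + 1, b.2) : Box) ∈ trK v J ↔ ((b.1 - v.1 + 1, b.2 - v.2) : Box) ∈ J := by
    intro b; rw [mem_trK]
    have e : ((((b.1 + 1, b.2) : Box).1 - v.1, ((b.1 + 1, b.2) : Box).2 - v.2) : Box) = ((b.1 - v.1 + 1, b.2 - v.2) : Box) := box_eq (by simp; omega) (by simp)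
    rw [e]
  refine ⟨?_, ?_, ?_, ?_, ?_⟩
  · intro b hb hnb
    rw [mem_trK] at hb
    rw [mR] at hnb
    have key := h1 _ hb (by simpa using hnb)
    show entryLE (T (b.1 - v.1, b.2 - v.2)) _
    rw [eR]
    simpa using key
  · intro b hb hnb
    rw [mem_trK] at hb
    rw [mD] at hnb
    have key := h2 _ hb (by simpa using hnb)
    show entryLE (T (b.1 - v.1, b.2 - v.2)) _
    rw [eD]
    simpa using key
  · intro b hb hnb a c ha hc
    rw [mem_trK] at hb
    rw [mD] at hnb
    rw [eD] at hc
    exact h3 _ hb (by simpa using hnb) a c ha (by simpa using hc)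
  · intro b hb hnb a c ha hc
    rw [mem_trK] at hb
    rw [mR] at hnb
    rw [eR] at hc
    exact h4 _ hb (by simpa using hnb) a c ha (by simpa using hc)
  · intro b hb
    rw [mem_trK] at hb
    exact h5 _ hb

lemma trK_trK (v : Box) (J : Set Box) : trK (-v) (trK v J) = J := by
  ext b
  simp only [mem_trK]
  have e : ((((b.1 - (-v).1, b.2 - (-v).2) : Box).1 - v.1, ((b.1 - (-v).1, b.2 - (-v).2) : Box).2 - v.2) : Box) = b := box_eq (by simp) (by simp)
  rw [e]

lemma shiftT_shiftT (v : Box) (T : Box → E) : shiftT (-v) (shiftT v T) = T := by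
  funext b
  unfold shiftT
  exact app_congr T (by simp) (by simp)

end SuperGlue
namespace SuperGlue

lemma shiftT_shiftT' (v : Box) (T : Box → E) : shiftT v (shiftT (-v) T) = T := by
  have := shiftT_shiftT (-v) T
  rwa [neg_neg] at this

lemma ssyt_trK_iff (v : Box) (J : Set Box) (T : Box → E) :
    IsSuperSSYT (trK v J) (shiftT v T) ↔ IsSuperSSYT J T := by
  refine ⟨fun h => ?_, ssyt_shift v J T⟩
  have := ssyt_shift (-v) _ _ h
  rwa [trK_trK, shiftT_shiftT] at this

lemma finite_tab {S : Set Box} (hS : S.Finite) {V : Set E} (hV : V.Finite) :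
    {T : Box → E | (∀ b, b ∉ S → T b = Sum.inl 0) ∧ ∀ b ∈ S, T b ∈ V}.Finite := by
  haveI := hS.to_subtype
  apply Set.Finite.of_finite_image (f := fun T (b : S) => T b.1)
  · apply (Set.Finite.pi (fun _ : S => hV)).subset
    rintro g ⟨T, ⟨hT0, hTV⟩, rfl⟩
    intro b _
    exact hTV b.1 b.2
  · intro T hT T' hT' he
    funext b
    by_cases hb : b ∈ S
    · exact congrFun he ⟨b, hb⟩
    · rw [hT.1 b hb, hT'.1 b hb]

/-- The set of super tableaux of shape `D` and content `μ`. -/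
def TabSet (D : Set Box) (μ : E →₀ ℕ) : Set (Box → E) :=
  {T | IsSuperSSYT D T ∧ ∀ x : E, μ x = cnt D T x}

lemma superSchur_apply (D : Set Box) (μ : E →₀ ℕ) :
    MvPowerSeries.coeff μ (superSchur D) = ((TabSet D μ).ncard : ℤ) := rfl

lemma cnt_ne_zero {D : Set Box} (hD : D.Finite) (T : Box → E) {b : Box} (hb : b ∈ D) :
    cnt D T (T b) ≠ 0 := by
  have hne : {c ∈ D | T c = T b}.Nonempty := ⟨b, hb, rfl⟩
  have hfin : {c ∈ D | T c = T b}.Finite := hD.subset (fun c hc => hc.1)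
  exact (Set.ncard_pos hfin).mpr hne |>.ne'

lemma tabSet_finite {D : Set Box} (hD : D.Finite) (μ : E →₀ ℕ) : (TabSet D μ).Finite := by
  apply (finite_tab hD (V := insert (Sum.inl 0) (μ.support : Set E))
    ((μ.support.finite_toSet).insert _)).subset
  rintro T ⟨hss, hcnt⟩
  refine ⟨hss.2.2.2.2, fun b hb => ?_⟩
  by_cases h0 : T b = Sum.inl 0
  · rw [h0]; exact Set.mem_insert _ _
  · refine Set.mem_insert_iff.mpr (Or.inr ?_)
    simp only [Finset.coe_sort_coe, Finset.mem_coe, Finsupp.mem_support_iff]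
    rw [hcnt (T b)]
    exact cnt_ne_zero hD T hb

/-- Pairs of tableaux on `I` and `J` with total content `μ`. -/
def PairSet (I J : Set Box) (μ : E →₀ ℕ) : Set ((Box → E) × (Box → E)) :=
  {p | IsSuperSSYT I p.1 ∧ IsSuperSSYT J p.2 ∧ ∀ x : E, μ x = cnt I p.1 x + cnt J p.2 x}

lemma pairSet_finite {I J : Set Box} (hI : I.Finite) (hJ : J.Finite) (μ : E →₀ ℕ) :
    (PairSet I J μ).Finite := by
  set V : Set E := insert (Sum.inl 0) (μ.support : Set E) with hV
  have hVfin : V.Finite := (μ.support.finite_toSet).insert _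
  apply (Set.Finite.prod (finite_tab hI hVfin) (finite_tab hJ hVfin)).subset
  rintro ⟨T₁, T₂⟩ ⟨h1, h2, hc⟩
  have key : ∀ (S S' : Set Box), S.Finite → ∀ (T T' : Box → E), (∀ x, μ x = cnt S T x + cnt S' T' x) →
      IsSuperSSYT S T → ∀ b ∈ S, T b ∈ V := by
    intro S S' hS T T' hμ hss b hb
    by_cases h0 : T b = Sum.inl 0
    · rw [h0]; exact Set.mem_insert _ _
    · refine Set.mem_insert_iff.mpr (Or.inr ?_)
      simp only [Finset.coe_sort_coe, Finset.mem_coe, Finsupp.mem_support_iff]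
      rw [hμ (T b)]
      have := cnt_ne_zero hS T hb
      omega
  constructor
  · exact ⟨h1.2.2.2.2, key I J hI T₁ T₂ hc h1⟩
  · refine ⟨h2.2.2.2.2, key J I hJ T₂ T₁ (fun x => by rw [hc x]; ring) h2⟩

lemma ncard_prod {α β : Type*} (s : Set α) (t : Set β) :
    (s ×ˢ t).ncard = s.ncard * t.ncard := by
  rw [← Nat.card_coe_set_eq, ← Nat.card_coe_set_eq, ← Nat.card_coe_set_eq,
    Nat.card_congr (Equiv.Set.prod s t), Nat.card_prod]

lemma ncard_biUnion {ι α : Type*} [DecidableEq ι] (s : Finset ι) (t : ι → Set α)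
    (hfin : ∀ i ∈ s, (t i).Finite)
    (hdisj : ∀ i ∈ s, ∀ j ∈ s, i ≠ j → ∀ x, x ∈ t i → x ∈ t j → False) :
    (⋃ i ∈ s, t i).ncard = ∑ i ∈ s, (t i).ncard := by
  induction s using Finset.induction_on with
  | empty => simp
  | @insert a s ha ih =>
    rw [Finset.set_biUnion_insert, Finset.sum_insert ha,
      Set.ncard_union_eq ?_ (hfin a (s.mem_insert_self a)) ?_,
      ih (fun i hi => hfin i (Finset.mem_insert_of_mem hi))
        (fun i hi j hj hne => hdisj i (Finset.mem_insert_of_mem hi) j (Finset.mem_insert_of_mem hj) hne)]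
    · rw [Set.disjoint_left]
      rintro x hxa hx
      simp only [Set.mem_iUnion] at hx
      obtain ⟨i, hi, hxi⟩ := hx
      exact hdisj a (s.mem_insert_self a) i (Finset.mem_insert_of_mem hi)
        (fun h => ha (h ▸ hi)) x hxa hxi
    · exact Set.Finite.biUnion s.finite_toSet (fun i hi => hfin i (Finset.mem_insert_of_mem hi))

end SuperGlue
namespace SuperGlue

/-- The content of a tableau on a finite shape, as a finsupp. -/
def contentOf {S : Set Box} (hS : S.Finite) (T : Box → E) : E →₀ ℕ :=
  Finsupp.ofSupportFinite (fun x => cnt S T x) (by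
    apply (hS.image T).subset
    intro x hx
    obtain ⟨b, hb, hbx⟩ := Set.nonempty_of_ncard_ne_zero hx
    exact ⟨b, hb, hbx⟩)

lemma contentOf_apply {S : Set Box} (hS : S.Finite) (T : Box → E) (x : E) :
    contentOf hS T x = cnt S T x := rfl

lemma sum_antidiagonal_eq_pairSet {I J : Set Box} (hI : I.Finite) (hJ : J.Finite) (μ : E →₀ ℕ) :
    ∑ p ∈ Finset.HasAntidiagonal.antidiagonal μ, (TabSet I p.1).ncard * (TabSet J p.2).ncard
      = (PairSet I J μ).ncard := by
  have hset : PairSet I J μ = ⋃ p ∈ Finset.HasAntidiagonal.antidiagonal μ, (TabSet I p.1) ×ˢ (TabSet J p.2) := by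
    ext ⟨T₁, T₂⟩
    simp only [Set.mem_iUnion, Set.mem_prod]
    constructor
    · rintro ⟨h1, h2, hc⟩
      refine ⟨(contentOf hI T₁, contentOf hJ T₂), ?_, ⟨h1, fun x => rfl⟩, ⟨h2, fun x => rfl⟩⟩
      rw [Finset.HasAntidiagonal.mem_antidiagonal]
      ext x
      rw [Finsupp.add_apply, contentOf_apply, contentOf_apply]
      exact (hc x).symm
    · rintro ⟨p, hp, ⟨h1, hc1⟩, ⟨h2, hc2⟩⟩
      rw [Finset.HasAntidiagonal.mem_antidiagonal] at hp
      refine ⟨h1, h2, fun x => ?_⟩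
      rw [← hc1 x, ← hc2 x, ← Finsupp.add_apply, hp]
  rw [hset, ncard_biUnion _ _ (fun p _ => (tabSet_finite hI p.1).prod (tabSet_finite hJ p.2))]
  · exact Finset.sum_congr rfl (fun p _ => (ncard_prod _ _).symm)
  · rintro p _ q _ hne ⟨T₁, T₂⟩ ⟨hp1, hp2⟩ ⟨hq1, hq2⟩
    apply hne
    have e1 : p.1 = q.1 := Finsupp.ext fun x => by rw [hp1.2 x, hq1.2 x]
    have e2 : p.2 = q.2 := Finsupp.ext fun x => by rw [hp2.2 x, hq2.2 x]
    exact Prod.ext e1 e2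

end SuperGlue
namespace SuperGlue

lemma resT_eq_of_mem {S : Set Box} (T : Box → E) {b : Box} (hb : b ∈ S) : resT S T b = T b := by
  simp [resT, hb]

lemma resT_eq_of_not_mem {S : Set Box} (T : Box → E) {b : Box} (hb : b ∉ S) :
    resT S T b = Sum.inl 0 := by
  simp [resT, hb]

lemma ssyt_res {D S : Set Box} {T : Box → E} (hT : IsSuperSSYT D T) (hS : S ⊆ D) :
    IsSuperSSYT S (resT S T) := by
  obtain ⟨h1, h2, h3, h4, h5⟩ := hT
  refine ⟨?_, ?_, ?_, ?_, fun b hb => resT_eq_of_not_mem T hb⟩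
  · intro b hb hnb
    rw [resT_eq_of_mem T hb, resT_eq_of_mem T hnb]
    exact h1 b (hS hb) (hS hnb)
  · intro b hb hnb
    rw [resT_eq_of_mem T hb, resT_eq_of_mem T hnb]
    exact h2 b (hS hb) (hS hnb)
  · intro b hb hnb
    rw [resT_eq_of_mem T hb, resT_eq_of_mem T hnb]
    exact h3 b (hS hb) (hS hnb)
  · intro b hb hnb
    rw [resT_eq_of_mem T hb, resT_eq_of_mem T hnb]
    exact h4 b (hS hb) (hS hnb)

lemma rowOK_of_ssyt {D : Set Box} {T : Box → E} (hT : IsSuperSSYT D T) {b : Box}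
    (hb : b ∈ D) (hnb : ((b.1, b.2 + 1) : Box) ∈ D) : rowOK (T b) (T (b.1, b.2 + 1)) :=
  ⟨hT.1 b hb hnb, hT.2.2.2.1 b hb hnb⟩

lemma colOK_of_ssyt {D : Set Box} {T : Box → E} (hT : IsSuperSSYT D T) {b : Box}
    (hb : b ∈ D) (hnb : ((b.1 + 1, b.2) : Box) ∈ D) : colOK (T b) (T (b.1 + 1, b.2)) :=
  ⟨hT.2.1 b hb hnb, hT.2.2.1 b hb hnb⟩

lemma ssyt_union {I K : Set Box} {T : Box → E}
    (hI : IsSuperSSYT I (resT I T)) (hK : IsSuperSSYT K (resT K T))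
    (h0 : ∀ b, b ∉ I ∪ K → T b = Sum.inl 0)
    (crR1 : ∀ b ∈ I, ((b.1, b.2 + 1) : Box) ∈ K → rowOK (T b) (T (b.1, b.2 + 1)))
    (crR2 : ∀ b ∈ K, ((b.1, b.2 + 1) : Box) ∈ I → rowOK (T b) (T (b.1, b.2 + 1)))
    (crC1 : ∀ b ∈ I, ((b.1 + 1, b.2) : Box) ∈ K → colOK (T b) (T (b.1 + 1, b.2)))
    (crC2 : ∀ b ∈ K, ((b.1 + 1, b.2) : Box) ∈ I → colOK (T b) (T (b.1 + 1, b.2))) :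
    IsSuperSSYT (I ∪ K) T := by
  have hIr : ∀ b ∈ I, resT I T b = T b := fun b hb => resT_eq_of_mem T hb
  have hKr : ∀ b ∈ K, resT K T b = T b := fun b hb => resT_eq_of_mem T hb
  refine ⟨?_, ?_, ?_, ?_, h0⟩
  · rintro b (hb | hb) (hnb | hnb)
    · have := hI.1 b hb hnb; rwa [hIr b hb, hIr _ hnb] at this
    · exact (crR1 b hb hnb).1
    · exact (crR2 b hb hnb).1
    · have := hK.1 b hb hnb; rwa [hKr b hb, hKr _ hnb] at this
  · rintro b (hb | hb) (hnb | hnb)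
    · have := hI.2.1 b hb hnb; rwa [hIr b hb, hIr _ hnb] at this
    · exact (crC1 b hb hnb).1
    · exact (crC2 b hb hnb).1
    · have := hK.2.1 b hb hnb; rwa [hKr b hb, hKr _ hnb] at this
  · rintro b (hb | hb) (hnb | hnb)
    · have := hI.2.2.1 b hb hnb; rwa [hIr b hb, hIr _ hnb] at this
    · exact (crC1 b hb hnb).2
    · exact (crC2 b hb hnb).2
    · have := hK.2.2.1 b hb hnb; rwa [hKr b hb, hKr _ hnb] at this
  · rintro b (hb | hb) (hnb | hnb)
    · have := hI.2.2.2.1 b hb hnb; rwa [hIr b hb, hIr _ hnb] at this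
    · exact (crR1 b hb hnb).2
    · exact (crR2 b hb hnb).2
    · have := hK.2.2.2.1 b hb hnb; rwa [hKr b hb, hKr _ hnb] at this

end SuperGlue
namespace SuperGlue

lemma ncard_glue (I J : Set Box) (v u l : Box) (finI : I.Finite) (finJ : J.Finite)
    (hdis : ∀ b ∈ I, b ∉ trK v J)
    (hl : l ∈ J) (hu : u ∈ I)
    (edge : E → E → Prop)
    (hedge : ∀ T : Box → E,
      ((∀ b ∈ I, ((b.1, b.2 + 1) : Box) ∈ trK v J → rowOK (T b) (T (b.1, b.2 + 1))) ∧
       (∀ b ∈ trK v J, ((b.1, b.2 + 1) : Box) ∈ I → rowOK (T b) (T (b.1, b.2 + 1))) ∧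
       (∀ b ∈ I, ((b.1 + 1, b.2) : Box) ∈ trK v J → colOK (T b) (T (b.1 + 1, b.2))) ∧
       (∀ b ∈ trK v J, ((b.1 + 1, b.2) : Box) ∈ I → colOK (T b) (T (b.1 + 1, b.2))))
      ↔ edge (T u) (T (l.1 + v.1, l.2 + v.2)))
    (μ : E →₀ ℕ) :
    (TabSet (I ∪ trK v J) μ).ncard
      = {p ∈ PairSet I J μ | edge (p.1 u) (p.2 l)}.ncard := by
  classical
  set K := trK v J with hKdef
  set w : Box := (l.1 + v.1, l.2 + v.2) with hwdef
  have finK : K.Finite := by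
    rw [hKdef, ← boxTranslate_eq_trK]
    exact finJ.image _
  have hwK : w ∈ K := by
    rw [hKdef, mem_trK]
    have e : ((w.1 - v.1, w.2 - v.2) : Box) = l := box_eq (by simp [hwdef]) (by simp [hwdef])
    rw [e]; exact hl
  set P' : Set ((Box → E) × (Box → E)) := {p ∈ PairSet I J μ | edge (p.1 u) (p.2 l)} with hP'
  set Φ : (Box → E) × (Box → E) → (Box → E) := fun p => glueT I p.1 (shiftT v p.2) with hΦ
  -- pointwise values of the glued tableau
  have h1 : ∀ (p : (Box → E) × (Box → E)), ∀ b ∈ I, Φ p b = p.1 b := by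
    intro p b hb; simp [hΦ, glueT, hb]
  have h2 : ∀ (p : (Box → E) × (Box → E)), ∀ b, b ∉ I → Φ p b = shiftT v p.2 b := by
    intro p b hb; simp [hΦ, glueT, hb]
  have h3 : ∀ (p : (Box → E) × (Box → E)), IsSuperSSYT I p.1 → resT I (Φ p) = p.1 := by
    intro p hss
    funext b
    by_cases hb : b ∈ I
    · rw [resT_eq_of_mem _ hb, h1 p b hb]
    · rw [resT_eq_of_not_mem _ hb, hss.2.2.2.2 b hb]
  have hshift : ∀ (p : (Box → E) × (Box → E)), IsSuperSSYT J p.2 →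
      ∀ b, b ∉ K → shiftT v p.2 b = Sum.inl 0 := by
    intro p hss b hb
    exact hss.2.2.2.2 _ (by rwa [hKdef, mem_trK] at hb)
  have h4 : ∀ (p : (Box → E) × (Box → E)), IsSuperSSYT J p.2 → resT K (Φ p) = shiftT v p.2 := by
    intro p hss
    funext b
    by_cases hb : b ∈ K
    · rw [resT_eq_of_mem _ hb, h2 p b (fun hbI => hdis b hbI hb)]
    · rw [resT_eq_of_not_mem _ hb, hshift p hss b hb]
  have hTw : ∀ (p : (Box → E) × (Box → E)), Φ p w = p.2 l := by
    intro p
    rw [h2 p w (fun hwI => hdis w hwI hwK)]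
    show p.2 (w.1 - v.1, w.2 - v.2) = p.2 l
    exact app_congr _ (by simp [hwdef]) (by simp [hwdef])
  have hbij : Set.BijOn Φ P' (TabSet (I ∪ K) μ) := by
    refine ⟨?_, ?_, ?_⟩
    · -- MapsTo
      rintro p ⟨⟨hp1, hp2, hpc⟩, hpe⟩
      have hK2 : IsSuperSSYT K (shiftT v p.2) := (ssyt_trK_iff v J p.2).mpr hp2
      have hres1 : resT I (Φ p) = p.1 := h3 p hp1
      have hres2 : resT K (Φ p) = shiftT v p.2 := h4 p hp2
      have hedgeT : edge (Φ p u) (Φ p w) := by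
        rw [h1 p u hu, hTw p]; exact hpe
      have hcross := (hedge (Φ p)).mpr hedgeT
      constructor
      · refine ssyt_union (hres1 ▸ hp1) (hres2 ▸ hK2) ?_ hcross.1 hcross.2.1 hcross.2.2.1 hcross.2.2.2
        intro b hb
        rw [Set.mem_union] at hb
        push_neg at hb
        rw [h2 p b hb.1]
        exact hshift p hp2 b hb.2
      · intro x
        rw [cnt_union finI finK hdis (Φ p) x,
          cnt_congr (fun b hb => h1 p b hb) x,
          cnt_congr (fun b hb => h2 p b (fun hbI => hdis b hbI hb)) x]
        rw [hKdef, cnt_trK]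
        exact hpc x
    · -- InjOn
      rintro p ⟨⟨hp1, hp2, -⟩, -⟩ q ⟨⟨hq1, hq2, -⟩, -⟩ he
      have e1 : p.1 = q.1 := by rw [← h3 p hp1, ← h3 q hq1, he]
      have e2 : shiftT v p.2 = shiftT v q.2 := by rw [← h4 p hp2, ← h4 q hq2, he]
      have e2' : p.2 = q.2 := by
        rw [← shiftT_shiftT v p.2, ← shiftT_shiftT v q.2, e2]
      exact Prod.ext e1 e2'
    · -- SurjOn
      rintro T ⟨hss, hcnt⟩
      set T₁ : Box → E := resT I T with hT₁
      set T₂ : Box → E := shiftT (-v) (resT K T) with hT₂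
      have hsT₂ : shiftT v T₂ = resT K T := by rw [hT₂, shiftT_shiftT']
      have hss1 : IsSuperSSYT I T₁ := ssyt_res hss Set.subset_union_left
      have hssK : IsSuperSSYT K (resT K T) := ssyt_res hss Set.subset_union_right
      have hss2 : IsSuperSSYT J T₂ := by
        rw [← ssyt_trK_iff v, hsT₂]; exact hssK
      have hΦT : Φ (T₁, T₂) = T := by
        funext b
        by_cases hb : b ∈ I
        · rw [h1 _ b hb]; exact resT_eq_of_mem T hb
        · rw [h2 _ b hb]
          show shiftT v T₂ b = T b
          rw [hsT₂]
          by_cases hbK : b ∈ K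
          · exact resT_eq_of_mem T hbK
          · rw [resT_eq_of_not_mem T hbK, hss.2.2.2.2 b (by simp [hb, hbK])]
      refine ⟨(T₁, T₂), ⟨⟨hss1, hss2, ?_⟩, ?_⟩, hΦT⟩
      · intro x
        rw [hcnt x, cnt_union finI finK hdis T x,
          cnt_congr (fun b hb => (resT_eq_of_mem T hb).symm) x (T' := T₁)]
        congr 1
        rw [cnt_congr (fun b hb => (resT_eq_of_mem T hb).symm) x (T' := resT K T),
          ← hsT₂, hKdef, cnt_trK]
      · -- the edge condition
        have hcross : edge (T u) (T w) := by
          refine (hedge T).mp ⟨?_, ?_, ?_, ?_⟩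
          · intro b hb hnb
            exact rowOK_of_ssyt hss (Set.mem_union_left _ hb) (Set.mem_union_right _ hnb)
          · intro b hb hnb
            exact rowOK_of_ssyt hss (Set.mem_union_right _ hb) (Set.mem_union_left _ hnb)
          · intro b hb hnb
            exact colOK_of_ssyt hss (Set.mem_union_left _ hb) (Set.mem_union_right _ hnb)
          · intro b hb hnb
            exact colOK_of_ssyt hss (Set.mem_union_right _ hb) (Set.mem_union_left _ hnb)
        have e1 : T₁ u = T u := resT_eq_of_mem T hu
        have e2 : T₂ l = T w := by
          rw [hT₂]
          show resT K T (l.1 - (-v).1, l.2 - (-v).2) = T w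
          rw [app_congr (resT K T) (a := ((l.1 - (-v).1, l.2 - (-v).2) : Box)) (b := w)
            (by simp [hwdef]) (by simp [hwdef])]
          exact resT_eq_of_mem T hwK
        show edge (T₁ u) (T₂ l)
        rw [e1, e2]
        exact hcross
  rw [← hbij.image_eq, Set.ncard_image_of_injOn hbij.injOn]

end SuperGlue
namespace SuperGlue

lemma gK_R {J : Set Box} {u l : Box} (gJ : ∀ c ∈ J, c.1 ≤ l.1 ∧ l.2 ≤ c.2)
    (c : Box) (hc : c ∈ trK (u.1 - l.1, u.2 + 1 - l.2) J) :
    c.1 ≤ u.1 ∧ u.2 + 1 ≤ c.2 := by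
  rw [mem_trK] at hc
  have h : c.1 - (u.1 - l.1) ≤ l.1 ∧ l.2 ≤ c.2 - (u.2 + 1 - l.2) := gJ _ hc
  omega

lemma gK_U {J : Set Box} {u l : Box} (gJ : ∀ c ∈ J, c.1 ≤ l.1 ∧ l.2 ≤ c.2)
    (c : Box) (hc : c ∈ trK (u.1 - 1 - l.1, u.2 - l.2) J) :
    c.1 ≤ u.1 - 1 ∧ u.2 ≤ c.2 := by
  rw [mem_trK] at hc
  have h : c.1 - (u.1 - 1 - l.1) ≤ l.1 ∧ l.2 ≤ c.2 - (u.2 - l.2) := gJ _ hc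
  omega

lemma hdis_R {I J : Set Box} {u l : Box} (gI : ∀ c ∈ I, u.1 ≤ c.1 ∧ c.2 ≤ u.2)
    (gJ : ∀ c ∈ J, c.1 ≤ l.1 ∧ l.2 ≤ c.2) (b : Box) (hb : b ∈ I) :
    b ∉ trK (u.1 - l.1, u.2 + 1 - l.2) J := by
  intro hbK
  have h1 := gI b hb
  have h2 := gK_R gJ b hbK
  omega

lemma hdis_U {I J : Set Box} {u l : Box} (gI : ∀ c ∈ I, u.1 ≤ c.1 ∧ c.2 ≤ u.2)
    (gJ : ∀ c ∈ J, c.1 ≤ l.1 ∧ l.2 ≤ c.2) (b : Box) (hb : b ∈ I) :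
    b ∉ trK (u.1 - 1 - l.1, u.2 - l.2) J := by
  intro hbK
  have h1 := gI b hb
  have h2 := gK_U gJ b hbK
  omega

lemma hedge_R {I J : Set Box} {u l : Box} (gI : ∀ c ∈ I, u.1 ≤ c.1 ∧ c.2 ≤ u.2)
    (gJ : ∀ c ∈ J, c.1 ≤ l.1 ∧ l.2 ≤ c.2) (hu : u ∈ I) (hl : l ∈ J) (T : Box → E) :
    ((∀ b ∈ I, ((b.1, b.2 + 1) : Box) ∈ trK (u.1 - l.1, u.2 + 1 - l.2) J →
        rowOK (T b) (T (b.1, b.2 + 1))) ∧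
     (∀ b ∈ trK (u.1 - l.1, u.2 + 1 - l.2) J, ((b.1, b.2 + 1) : Box) ∈ I →
        rowOK (T b) (T (b.1, b.2 + 1))) ∧
     (∀ b ∈ I, ((b.1 + 1, b.2) : Box) ∈ trK (u.1 - l.1, u.2 + 1 - l.2) J →
        colOK (T b) (T (b.1 + 1, b.2))) ∧
     (∀ b ∈ trK (u.1 - l.1, u.2 + 1 - l.2) J, ((b.1 + 1, b.2) : Box) ∈ I →
        colOK (T b) (T (b.1 + 1, b.2))))
    ↔ rowOK (T u) (T (l.1 + (u.1 - l.1, u.2 + 1 - l.2).1, l.2 + (u.1 - l.1, u.2 + 1 - l.2).2)) := by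
  have ww : ((l.1 + (u.1 - l.1, u.2 + 1 - l.2).1, l.2 + (u.1 - l.1, u.2 + 1 - l.2).2) : Box)
      = ((u.1, u.2 + 1) : Box) := box_eq (by simp) (by simp)
  rw [ww]
  have hwK : ((u.1, u.2 + 1) : Box) ∈ trK (u.1 - l.1, u.2 + 1 - l.2) J := by
    rw [mem_trK]
    have e : ((((u.1, u.2 + 1) : Box).1 - (u.1 - l.1, u.2 + 1 - l.2).1,
        ((u.1, u.2 + 1) : Box).2 - (u.1 - l.1, u.2 + 1 - l.2).2) : Box) = l :=
      box_eq (by simp) (by simp)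
    rw [e]; exact hl
  constructor
  · rintro ⟨c1, -, -, -⟩
    have h := c1 u hu (by exact hwK)
    exact h
  · intro hrow
    refine ⟨?_, ?_, ?_, ?_⟩
    · intro b hbI hbK
      have h1 := gI b hbI
      have h2 : b.1 ≤ u.1 ∧ u.2 + 1 ≤ b.2 + 1 := gK_R gJ _ hbK
      have hb : b = u := box_eq (by omega) (by omega)
      subst hb
      exact hrow
    · intro b hbK hbI
      have h1 : u.1 ≤ b.1 ∧ b.2 + 1 ≤ u.2 := gI _ hbI
      have h2 := gK_R gJ b hbK
      omega
    · intro b hbI hbK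
      have h1 := gI b hbI
      have h2 : b.1 + 1 ≤ u.1 ∧ u.2 + 1 ≤ b.2 := gK_R gJ _ hbK
      omega
    · intro b hbK hbI
      have h1 : u.1 ≤ b.1 + 1 ∧ b.2 ≤ u.2 := gI _ hbI
      have h2 := gK_R gJ b hbK
      omega

lemma hedge_U {I J : Set Box} {u l : Box} (gI : ∀ c ∈ I, u.1 ≤ c.1 ∧ c.2 ≤ u.2)
    (gJ : ∀ c ∈ J, c.1 ≤ l.1 ∧ l.2 ≤ c.2) (hu : u ∈ I) (hl : l ∈ J) (T : Box → E) :
    ((∀ b ∈ I, ((b.1, b.2 + 1) : Box) ∈ trK (u.1 - 1 - l.1, u.2 - l.2) J →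
        rowOK (T b) (T (b.1, b.2 + 1))) ∧
     (∀ b ∈ trK (u.1 - 1 - l.1, u.2 - l.2) J, ((b.1, b.2 + 1) : Box) ∈ I →
        rowOK (T b) (T (b.1, b.2 + 1))) ∧
     (∀ b ∈ I, ((b.1 + 1, b.2) : Box) ∈ trK (u.1 - 1 - l.1, u.2 - l.2) J →
        colOK (T b) (T (b.1 + 1, b.2))) ∧
     (∀ b ∈ trK (u.1 - 1 - l.1, u.2 - l.2) J, ((b.1 + 1, b.2) : Box) ∈ I →
        colOK (T b) (T (b.1 + 1, b.2))))
    ↔ colOK (T (l.1 + (u.1 - 1 - l.1, u.2 - l.2).1, l.2 + (u.1 - 1 - l.1, u.2 - l.2).2)) (T u) := by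
  have ww : ((l.1 + (u.1 - 1 - l.1, u.2 - l.2).1, l.2 + (u.1 - 1 - l.1, u.2 - l.2).2) : Box)
      = ((u.1 - 1, u.2) : Box) := box_eq (by simp) (by simp)
  rw [ww]
  have hwK : ((u.1 - 1, u.2) : Box) ∈ trK (u.1 - 1 - l.1, u.2 - l.2) J := by
    rw [mem_trK]
    have e : ((((u.1 - 1, u.2) : Box).1 - (u.1 - 1 - l.1, u.2 - l.2).1,
        ((u.1 - 1, u.2) : Box).2 - (u.1 - 1 - l.1, u.2 - l.2).2) : Box) = l :=
      box_eq (by simp) (by simp)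
    rw [e]; exact hl
  have hbu : ((((u.1 - 1, u.2) : Box).1 + 1, ((u.1 - 1, u.2) : Box).2) : Box) = u :=
    box_eq (by simp) (by simp)
  constructor
  · rintro ⟨-, -, -, c4⟩
    have h := c4 _ hwK (by rw [hbu]; exact hu)
    rwa [hbu] at h
  · intro hcol
    refine ⟨?_, ?_, ?_, ?_⟩
    · intro b hbI hbK
      have h1 := gI b hbI
      have h2 : b.1 ≤ u.1 - 1 ∧ u.2 ≤ b.2 + 1 := gK_U gJ _ hbK
      omega
    · intro b hbK hbI
      have h1 : u.1 ≤ b.1 ∧ b.2 + 1 ≤ u.2 := gI _ hbI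
      have h2 := gK_U gJ b hbK
      omega
    · intro b hbI hbK
      have h1 := gI b hbI
      have h2 : b.1 + 1 ≤ u.1 - 1 ∧ u.2 ≤ b.2 := gK_U gJ _ hbK
      omega
    · intro b hbK hbI
      have h1 : u.1 ≤ b.1 + 1 ∧ b.2 ≤ u.2 := gI _ hbI
      have h2 := gK_U gJ b hbK
      have hb : b = ((u.1 - 1, u.2) : Box) := box_eq (by omega) (by omega)
      subst hb
      rw [hbu]
      exact hcol

lemma main_count {I J : Set Box} {u l : Box} (gI : ∀ c ∈ I, u.1 ≤ c.1 ∧ c.2 ≤ u.2)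
    (gJ : ∀ c ∈ J, c.1 ≤ l.1 ∧ l.2 ≤ c.2)
    (finI : I.Finite) (finJ : J.Finite) (hu : u ∈ I) (hl : l ∈ J) (μ : E →₀ ℕ) :
    ∑ p ∈ Finset.HasAntidiagonal.antidiagonal μ, (TabSet I p.1).ncard * (TabSet J p.2).ncard
      = (TabSet (I ∪ trK (u.1 - l.1, u.2 + 1 - l.2) J) μ).ncard
        + (TabSet (I ∪ trK (u.1 - 1 - l.1, u.2 - l.2) J) μ).ncard := by
  rw [sum_antidiagonal_eq_pairSet finI finJ μ,
    ncard_glue I J (u.1 - l.1, u.2 + 1 - l.2) u l finI finJ (hdis_R gI gJ) hl hu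
      (fun a b => rowOK a b) (fun T => hedge_R gI gJ hu hl T) μ,
    ncard_glue I J (u.1 - 1 - l.1, u.2 - l.2) u l finI finJ (hdis_U gI gJ) hl hu
      (fun a b => colOK b a) (fun T => hedge_U gI gJ hu hl T) μ]
  have hsplit : PairSet I J μ
      = {p ∈ PairSet I J μ | rowOK (p.1 u) (p.2 l)}
        ∪ {p ∈ PairSet I J μ | colOK (p.2 l) (p.1 u)} := by
    ext p
    constructor
    · intro hp
      rcases rowOK_or_colOK (p.1 u) (p.2 l) with ⟨h, -⟩ | ⟨-, h⟩
      · exact Or.inl ⟨hp, h⟩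
      · exact Or.inr ⟨hp, h⟩
    · rintro (⟨hp, -⟩ | ⟨hp, -⟩) <;> exact hp
  have hdisj : Disjoint {p ∈ PairSet I J μ | rowOK (p.1 u) (p.2 l)}
      {p ∈ PairSet I J μ | colOK (p.2 l) (p.1 u)} := by
    rw [Set.disjoint_left]
    rintro p ⟨-, h1⟩ ⟨-, h2⟩
    rcases rowOK_or_colOK (p.1 u) (p.2 l) with ⟨-, hn⟩ | ⟨hn, -⟩
    · exact hn h2
    · exact hn h1
  have hf1 : {p ∈ PairSet I J μ | rowOK (p.1 u) (p.2 l)}.Finite :=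
    (pairSet_finite finI finJ μ).subset (fun p hp => hp.1)
  have hf2 : {p ∈ PairSet I J μ | colOK (p.2 l) (p.1 u)}.Finite :=
    (pairSet_finite finI finJ μ).subset (fun p hp => hp.1)
  conv_lhs => rw [hsplit]
  exact Set.ncard_union_eq hdisj hf1 hf2

end SuperGlue
namespace SuperGlue

lemma geom_I {I : Set Box} (hI : IsSkewShape I) {u : Box} (hu : IsUpperRightCorner I u) :
    ∀ c ∈ I, u.1 ≤ c.1 ∧ c.2 ≤ u.2 := by
  obtain ⟨lam, mu, hle, rfl⟩ := hI
  obtain ⟨huI, hmin, hmax⟩ := hu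
  obtain ⟨hu1, hu2, hu3⟩ := huI
  have hbox : ((u.1, (lam.part u.1.toNat : ℤ)) : Box) ∈ skewCells lam mu :=
    ⟨hu1, hu2.trans_le hu3, le_refl _⟩
  have hlamu : (lam.part u.1.toNat : ℤ) ≤ u.2 := hmax _ hbox rfl
  intro c hc
  obtain ⟨hc1, hc2, hc3⟩ := hc
  have hr : u.1 ≤ c.1 := hmin c ⟨hc1, hc2, hc3⟩
  refine ⟨hr, ?_⟩
  have hmono : lam.part c.1.toNat ≤ lam.part u.1.toNat :=
    lam.antitone (by omega)
  have hcast : (lam.part c.1.toNat : ℤ) ≤ (lam.part u.1.toNat : ℤ) := by exact_mod_cast hmono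
  omega

lemma geom_J {J : Set Box} (hJ : IsSkewShape J) {l : Box} (hl : IsLowerLeftCorner J l) :
    ∀ c ∈ J, c.1 ≤ l.1 ∧ l.2 ≤ c.2 := by
  obtain ⟨lam, mu, hle, rfl⟩ := hJ
  obtain ⟨hlJ, hmax, hmin⟩ := hl
  obtain ⟨hl1, hl2, hl3⟩ := hlJ
  have c2 : (mu.part l.1.toNat : ℤ) < (mu.part l.1.toNat : ℤ) + 1 := by omega
  have c3 : (mu.part l.1.toNat : ℤ) + 1 ≤ (lam.part l.1.toNat : ℤ) := by omega
  have hbox : ((l.1, (mu.part l.1.toNat : ℤ) + 1) : Box) ∈ skewCells lam mu :=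
    ⟨hl1, c2, c3⟩
  have hmul : l.2 ≤ (mu.part l.1.toNat : ℤ) + 1 := hmin _ hbox rfl
  intro c hc
  obtain ⟨hc1, hc2, hc3⟩ := hc
  have hr : c.1 ≤ l.1 := hmax c ⟨hc1, hc2, hc3⟩
  refine ⟨hr, ?_⟩
  have hmono : mu.part l.1.toNat ≤ mu.part c.1.toNat :=
    mu.antitone (by omega)
  have hcast : (mu.part l.1.toNat : ℤ) ≤ (mu.part c.1.toNat : ℤ) := by exact_mod_cast hmono
  omega

lemma skew_finite {I : Set Box} (hI : IsSkewShape I) : I.Finite := by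
  obtain ⟨lam, mu, hle, rfl⟩ := hI
  obtain ⟨N, hN⟩ := lam.eventually_zero
  apply (Set.Finite.prod (Set.finite_Icc (1 : ℤ) N) (Set.finite_Icc (1 : ℤ) (lam.part 0))).subset
  rintro c ⟨h1, h2, h3⟩
  have hnn : (0 : ℤ) ≤ (mu.part c.1.toNat : ℤ) := Int.ofNat_nonneg _
  have hrow : c.1 ≤ (N : ℤ) := by
    by_contra hcon
    have h0 : lam.part c.1.toNat = 0 := hN c.1.toNat (by omega)
    rw [h0] at h3
    simp at h3
    omega
  have hcol : (lam.part c.1.toNat : ℤ) ≤ (lam.part 0 : ℤ) := by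
    exact_mod_cast lam.antitone (Nat.zero_le _)
  exact Set.mem_prod.mpr ⟨Set.mem_Icc.mpr ⟨h1, hrow⟩, Set.mem_Icc.mpr ⟨by omega, by omega⟩⟩

end SuperGlue
/-- **supersymmetric product rule.** For skew diagrams `I` and `J`,
`s_I(X,Y) · s_J(X,Y) = s_{I▶J}(X,Y) + s_{I↑J}(X,Y)`. -/
theorem superSchur_mul_eq_glue
    (I J : Set Box) (hI : IsSkewShape I) (hJ : IsSkewShape J)
    (hIne : I.Nonempty) (hJne : J.Nonempty)
    (u l : Box) (hu : IsUpperRightCorner I u) (hl : IsLowerLeftCorner J l) :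
    superSchur I * superSchur J =
      superSchur (I ∪ boxTranslate (u.1 - l.1, u.2 + 1 - l.2) J) +
      superSchur (I ∪ boxTranslate (u.1 - 1 - l.1, u.2 - l.2) J) := by
  classical
  have finI := SuperGlue.skew_finite hI
  have finJ := SuperGlue.skew_finite hJ
  have gI := SuperGlue.geom_I hI hu
  have gJ := SuperGlue.geom_J hJ hl
  apply MvPowerSeries.ext
  intro μ
  rw [map_add, MvPowerSeries.coeff_mul, SuperGlue.boxTranslate_eq_trK,
    SuperGlue.boxTranslate_eq_trK]
  simp only [SuperGlue.superSchur_apply]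
  rw [← Nat.cast_add, ← SuperGlue.main_count gI gJ finI finJ hu.1 hl.1 μ]
  push_cast
  rfl
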